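/- arXiv:1403.1696 — 2 statements merged into one kernel-verified Lean document; each statement's English description precedes it below -/
import Mathlib

section
/- For a random vector z with mean zero and covariance Σ_z and a fixed matrix A_Ω satisfying the RIP bound of order K (|Ω| ≤ K), the oracle error satisfies E_z[‖A_Ω† z‖²] ≤ (K/(1−δ_K)) · λ_max(Σ_z). -/
open Matrix MeasureTheory

private lemma quad_le_ciSup_eigen {n : ℕ} (M : Matrix (Fin n) (Fin n) ℝ)
    (hM : M.IsHermitian) (v : Fin n → ℝ) :
    v ⬝ᵥ M.mulVec v ≤ (⨆ i, hM.eigenvalues i) * ∑ i, v i ^ 2 := by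
  set U : Matrix (Fin n) (Fin n) ℝ := (hM.eigenvectorUnitary : Matrix (Fin n) (Fin n) ℝ) with hU
  set w : Fin n → ℝ := v ᵥ* U with hw
  have hstar : star U *ᵥ v = w := by
    ext j
    simp [hw, star_eq_conjTranspose, conjTranspose_apply, mulVec, vecMul, dotProduct, mul_comm]
  have hc : ∀ i, hM.eigenvalues i ≤ ⨆ i, hM.eigenvalues i := fun i =>
    le_ciSup (Set.Finite.bddAbove (Set.finite_range _)) i
  have h1 : v ⬝ᵥ M.mulVec v = ∑ j, hM.eigenvalues j * w j ^ 2 := by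
    conv_lhs => rw [hM.spectral_theorem, Unitary.conjStarAlgAut_apply]
    rw [← mulVec_mulVec, ← mulVec_mulVec, hstar, dotProduct_mulVec]
    simp [← hw, dotProduct, mulVec_diagonal, sq]
    exact Finset.sum_congr rfl fun x _ => by ring
  have h2 : ∑ j, w j ^ 2 = ∑ i, v i ^ 2 := by
    have huu : U * star U = 1 := mem_unitaryGroup_iff.mp hM.eigenvectorUnitary.2
    have h3 : ∑ j, w j ^ 2 = v ⬝ᵥ (U * star U) *ᵥ v := by
      rw [← mulVec_mulVec, hstar, dotProduct_mulVec, ← hw]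
      simp [dotProduct, sq]
    rw [h3, huu, one_mulVec]
    simp [dotProduct, sq]
  rw [h1, ← h2, Finset.mul_sum]
  exact Finset.sum_le_sum fun j _ => mul_le_mul_of_nonneg_right (hc j) (sq_nonneg _)

private lemma trace_bound {Mdim : ℕ} {S : Type*} [Fintype S] [DecidableEq S]
    (AΩ : Matrix (Fin Mdim) S ℝ) (B : Matrix S (Fin Mdim) ℝ)
    (hB1 : AΩ * B * AΩ = AΩ) (hB3 : (AΩ * B)ᵀ = AΩ * B) (δ : ℝ) (hδ : δ < 1)
    (hquad : ∀ v : S → ℝ, (1 - δ) * ∑ s, v s ^ 2 ≤ v ⬝ᵥ (AΩᵀ * AΩ) *ᵥ v) :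
    (1 - δ) * ∑ s, ∑ m, B s m ^ 2 ≤ Fintype.card S := by
  have h1δ : (0 : ℝ) < 1 - δ := by linarith
  have hker : ∀ w : S → ℝ, AΩ *ᵥ w = 0 → w = 0 := by
    intro w hw
    have h := hquad w
    rw [← mulVec_mulVec, hw, mulVec_zero, dotProduct_zero] at h
    have hsum : ∑ s, w s ^ 2 ≤ 0 := by nlinarith [h, h1δ]
    have hz : ∑ s, w s ^ 2 = 0 :=
      le_antisymm hsum (Finset.sum_nonneg fun s _ => sq_nonneg _)
    funext s
    have := (Finset.sum_eq_zero_iff_of_nonneg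
      (fun s _ => sq_nonneg (w s))).mp hz s (Finset.mem_univ s)
    exact pow_eq_zero_iff (by norm_num) |>.mp this
  have hBA : B * AΩ = 1 := by
    have hv : ∀ v : S → ℝ, (B * AΩ) *ᵥ v = v := by
      intro v
      have h0 : AΩ *ᵥ ((B * AΩ) *ᵥ v - v) = 0 := by
        rw [mulVec_sub, mulVec_mulVec, ← Matrix.mul_assoc, hB1, sub_self]
      exact sub_eq_zero.mp (hker _ h0)
    ext i j
    have := congrFun (hv (Pi.single j 1)) i
    simpa [Matrix.one_apply, Pi.single_apply, mulVec_single] using this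
  have hGM : (AΩᵀ * AΩ) * (B * Bᵀ) = 1 := by
    calc (AΩᵀ * AΩ) * (B * Bᵀ) = AΩᵀ * (AΩ * B) * Bᵀ := by
          simp only [Matrix.mul_assoc]
      _ = AΩᵀ * (AΩ * B)ᵀ * Bᵀ := by rw [hB3]
      _ = (B * AΩ)ᵀ * (B * AΩ)ᵀ := by
          simp only [Matrix.transpose_mul, Matrix.mul_assoc]
      _ = 1 := by rw [hBA, Matrix.transpose_one, Matrix.one_mul]
  have htr : (Fintype.card S : ℝ)
      = ∑ m, (fun s => B s m) ⬝ᵥ (AΩᵀ * AΩ) *ᵥ (fun s => B s m) := by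
    have h1 : Matrix.trace ((AΩᵀ * AΩ) * (B * Bᵀ)) = (Fintype.card S : ℝ) := by
      rw [hGM, Matrix.trace_one]
    rw [← h1, ← Matrix.mul_assoc, Matrix.trace_mul_comm]
    simp only [Matrix.trace, Matrix.diag, Matrix.mul_apply, transpose_apply, mulVec, dotProduct]
  calc (1 - δ) * ∑ s, ∑ m, B s m ^ 2 = ∑ m, (1 - δ) * ∑ s, B s m ^ 2 := by
        rw [← Finset.mul_sum, Finset.sum_comm]
    _ ≤ ∑ m, (fun s => B s m) ⬝ᵥ (AΩᵀ * AΩ) *ᵥ (fun s => B s m) :=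
        Finset.sum_le_sum fun m _ => hquad _
    _ = Fintype.card S := htr.symm

/-- The four Penrose conditions characterizing the Moore–Penrose pseudoinverse. -/
def IsMoorePenrose {m n : Type*} [Fintype m] [Fintype n]
    (A : Matrix m n ℝ) (B : Matrix n m ℝ) : Prop :=
  A * B * A = A ∧ B * A * B = B ∧ (A * B)ᵀ = A * B ∧ (B * A)ᵀ = B * A

/-- For zero-mean noise `z` with covariance `Σ_z` and a fixed matrix `A` satisfying the
RIP of order `K` with constant `δ_K < 1`, for any support `Ω` with `|Ω| ≤ K` the oracle
error satisfies `E_z[‖A_Ω† z‖²] ≤ (K/(1−δ_K)) λ_max(Σ_z)`. -/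
theorem stmt16 (Mdim N K : ℕ) (A : Matrix (Fin Mdim) (Fin N) ℝ) (δ : ℝ) (hδ : δ < 1)
    (hRIP : ∀ θ : Fin N → ℝ, Set.ncard {i | θ i ≠ 0} ≤ K →
      (1 - δ) * ∑ i, θ i ^ 2 ≤ ∑ i, (A.mulVec θ i) ^ 2 ∧
      ∑ i, (A.mulVec θ i) ^ 2 ≤ (1 + δ) * ∑ i, θ i ^ 2)
    (S : Finset (Fin N)) (hS : S.card ≤ K)
    (AΩ : Matrix (Fin Mdim) {j // j ∈ S} ℝ)
    (hAΩ : AΩ = A.submatrix id (Subtype.val : {j // j ∈ S} → Fin N))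
    (B : Matrix {j // j ∈ S} (Fin Mdim) ℝ) (hB : IsMoorePenrose AΩ B)
    {Ω : Type*} [MeasureSpace Ω] (μ : Measure Ω) [IsProbabilityMeasure μ]
    (z : Ω → Fin Mdim → ℝ) (Sz : Matrix (Fin Mdim) (Fin Mdim) ℝ)
    (hzint : ∀ i j, Integrable (fun ω => z ω i * z ω j) μ)
    (hzmean : ∀ i, ∫ ω, z ω i ∂μ = 0)
    (hzcov : ∀ i j, ∫ ω, z ω i * z ω j ∂μ = Sz i j)
    (hSz : Sz.IsHermitian) :
    ∫ ω, ∑ i, (B.mulVec (z ω) i) ^ 2 ∂μ ≤ (K : ℝ) / (1 - δ) * ⨆ i, hSz.eigenvalues i := by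
  classical
  have h1δ : (0 : ℝ) < 1 - δ := by linarith
  set c : ℝ := ⨆ i, hSz.eigenvalues i with hc
  -- RIP quadratic bound for the restricted Gram matrix
  have hquad : ∀ v : {j // j ∈ S} → ℝ,
      (1 - δ) * ∑ s, v s ^ 2 ≤ v ⬝ᵥ (AΩᵀ * AΩ) *ᵥ v := by
    intro v
    set θ : Fin N → ℝ := fun j => if h : j ∈ S then v ⟨j, h⟩ else 0 with hθ
    have hsupp : Set.ncard {i | θ i ≠ 0} ≤ K := by
      refine le_trans (le_trans (Set.ncard_le_ncard ?_ S.finite_toSet) ?_) hS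
      · intro j hj
        simp only [hθ, Set.mem_setOf_eq] at hj
        by_contra h
        simp [h] at hj
        exact hj.elim fun hx _ => h (by exact_mod_cast hx)
      · rw [Set.ncard_coe_finset]
    have hsum : ∑ i, θ i ^ 2 = ∑ s, v s ^ 2 := by
      have h1 : ∑ s : {j // j ∈ S}, v s ^ 2 = ∑ j ∈ S, θ j ^ 2 := by
        rw [← Finset.sum_coe_sort S (fun j => θ j ^ 2)]
        exact Finset.sum_congr rfl fun s _ => by simp [hθ]
      rw [h1]
      exact (Finset.sum_subset (Finset.subset_univ S) (fun x _ hx => by simp [hθ, hx])).symm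
    have hmv : A *ᵥ θ = AΩ *ᵥ v := by
      ext i
      simp only [mulVec, dotProduct, hAΩ, submatrix_apply, id]
      have h2 : ∑ x : {j // j ∈ S}, A i ↑x * v x = ∑ j ∈ S, A i j * θ j := by
        rw [← Finset.sum_coe_sort S (fun j => A i j * θ j)]
        exact Finset.sum_congr rfl fun s _ => by simp [hθ]
      rw [h2]
      exact (Finset.sum_subset (Finset.subset_univ S) (fun x _ hx => by simp [hθ, hx])).symm
    have hq : ∑ i, (A *ᵥ θ) i ^ 2 = v ⬝ᵥ (AΩᵀ * AΩ) *ᵥ v := by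
      rw [hmv, ← mulVec_mulVec, dotProduct_mulVec, vecMul_transpose]
      simp [dotProduct, sq]
    calc (1 - δ) * ∑ s, v s ^ 2 = (1 - δ) * ∑ i, θ i ^ 2 := by rw [hsum]
      _ ≤ ∑ i, (A *ᵥ θ) i ^ 2 := (hRIP θ hsupp).1
      _ = v ⬝ᵥ (AΩᵀ * AΩ) *ᵥ v := hq
  -- trace bound
  have htrace : (1 - δ) * ∑ s, ∑ m, B s m ^ 2 ≤ (S.card : ℝ) := by
    have := trace_bound AΩ B hB.1 hB.2.2.1 δ hδ hquad
    rwa [Fintype.card_coe] at this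
  -- compute the expectation
  have hkey : ∫ ω, ∑ i, (B.mulVec (z ω) i) ^ 2 ∂μ
      = ∑ i, (B i) ⬝ᵥ Sz *ᵥ (B i) := by
    have hpt : ∀ ω, ∑ i, (B *ᵥ (z ω)) i ^ 2
        = ∑ i, ∑ j, ∑ k, (B i j * B i k) * (z ω j * z ω k) := by
      intro ω
      refine Finset.sum_congr rfl fun i _ => ?_
      simp only [mulVec, dotProduct, sq]
      rw [Finset.sum_mul_sum]
      exact Finset.sum_congr rfl fun j _ => Finset.sum_congr rfl fun k _ => by ring
    have hint2 : ∀ (i : {j // j ∈ S}) (j k : Fin Mdim),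
        Integrable (fun ω => (B i j * B i k) * (z ω j * z ω k)) μ :=
      fun i j k => (hzint j k).const_mul _
    have hint1 : ∀ (i : {j // j ∈ S}) (j : Fin Mdim),
        Integrable (fun ω => ∑ k, (B i j * B i k) * (z ω j * z ω k)) μ :=
      fun i j => integrable_finset_sum _ fun k _ => hint2 i j k
    have hint0 : ∀ (i : {j // j ∈ S}),
        Integrable (fun ω => ∑ j, ∑ k, (B i j * B i k) * (z ω j * z ω k)) μ :=
      fun i => integrable_finset_sum _ fun j _ => hint1 i j
    calc ∫ ω, ∑ i, (B.mulVec (z ω) i) ^ 2 ∂μ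
        = ∫ ω, ∑ i, ∑ j, ∑ k, (B i j * B i k) * (z ω j * z ω k) ∂μ := by
          congr 1; funext ω; exact hpt ω
      _ = ∑ i, ∫ ω, ∑ j, ∑ k, (B i j * B i k) * (z ω j * z ω k) ∂μ :=
          integral_finset_sum _ fun i _ => hint0 i
      _ = ∑ i, ∑ j, ∑ k, (B i j * B i k) * Sz j k := by
          refine Finset.sum_congr rfl fun i _ => ?_
          rw [integral_finset_sum _ fun j _ => hint1 i j]
          refine Finset.sum_congr rfl fun j _ => ?_
          rw [integral_finset_sum _ fun k _ => hint2 i j k]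
          refine Finset.sum_congr rfl fun k _ => ?_
          rw [MeasureTheory.integral_const_mul, hzcov]
      _ = ∑ i, (B i) ⬝ᵥ Sz *ᵥ (B i) := by
          refine Finset.sum_congr rfl fun i _ => ?_
          simp only [dotProduct, mulVec, Finset.mul_sum]
          exact Finset.sum_congr rfl fun j _ => Finset.sum_congr rfl fun k _ => by ring
  -- nonnegativity of the largest eigenvalue
  have hc0 : 0 ≤ c := by
    rcases Nat.eq_zero_or_pos Mdim with h0 | hpos
    · subst h0
      have he : (⨆ i : Fin 0, hSz.eigenvalues i) = 0 := by
        rw [iSup, Set.range_eq_empty, Real.sSup_empty]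
      rw [hc, he]
    · have i0 : Fin Mdim := ⟨0, hpos⟩
      have hd : (0 : ℝ) ≤ Sz i0 i0 := by
        rw [← hzcov i0 i0]
        exact integral_nonneg fun ω => mul_self_nonneg _
      have hv := quad_le_ciSup_eigen Sz hSz (Pi.single i0 1)
      have hlhs : (Pi.single i0 1 : Fin Mdim → ℝ) ⬝ᵥ Sz *ᵥ Pi.single i0 1 = Sz i0 i0 := by
        simp [dotProduct, mulVec, Pi.single_apply, Finset.sum_ite_eq', Finset.mul_sum]
      have hrhs : ∑ i, (Pi.single i0 1 : Fin Mdim → ℝ) i ^ 2 = 1 := by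
        simp [Pi.single_apply]
      rw [hlhs, hrhs, mul_one] at hv
      exact le_trans hd hv
  -- put it together
  rw [hkey]
  have step1 : ∑ i, (B i) ⬝ᵥ Sz *ᵥ (B i) ≤ c * ∑ s, ∑ m, B s m ^ 2 := by
    rw [Finset.mul_sum]
    exact Finset.sum_le_sum fun i _ => quad_le_ciSup_eigen Sz hSz (B i)
  have step2 : ∑ s, ∑ m, B s m ^ 2 ≤ (K : ℝ) / (1 - δ) := by
    rw [le_div_iff₀ h1δ]
    calc (∑ s, ∑ m, B s m ^ 2) * (1 - δ) = (1 - δ) * ∑ s, ∑ m, B s m ^ 2 := by ring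
      _ ≤ (S.card : ℝ) := htrace
      _ ≤ (K : ℝ) := by exact_mod_cast hS
  calc ∑ i, (B i) ⬝ᵥ Sz *ᵥ (B i) ≤ c * ∑ s, ∑ m, B s m ^ 2 := step1
    _ ≤ c * ((K : ℝ) / (1 - δ)) := mul_le_mul_of_nonneg_left step2 hc0
    _ = (K : ℝ) / (1 - δ) * c := mul_comm _ _
end

section
/- For a fixed matrix A_Ω satisfying the RIP of order K with constant δ_K < 1 and white noise z with covariance σ_z² I, the oracle error satisfies (K/(1+δ_K)) σ_z² ≤ E_z[‖A_Ω† z‖²] ≤ (K/(1−δ_K)) σ_z². -/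
open Matrix MeasureTheory

/-- Trace bounds for `B * Bᵀ` when `B` is the Moore–Penrose inverse of a matrix
whose Gram matrix has spectrum in `[1-δ, 1+δ]`. -/
theorem trace_pinv_bounds (Mdim K : ℕ) (AΩ : Matrix (Fin Mdim) (Fin K) ℝ) (δ : ℝ)
    (hδ : δ < 1)
    (hspec : ∀ lam ∈ spectrum ℝ (AΩᵀ * AΩ), lam ∈ Set.Icc (1 - δ) (1 + δ))
    (B : Matrix (Fin K) (Fin Mdim) ℝ) (hB : IsMoorePenrose AΩ B) :
    (K : ℝ) * (1 + δ)⁻¹ ≤ Matrix.trace (B * Bᵀ) ∧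
      Matrix.trace (B * Bᵀ) ≤ (K : ℝ) * (1 - δ)⁻¹ := by
  set G := AΩᵀ * AΩ with hGdef
  have hGherm : G.IsHermitian := by
    have := Matrix.isHermitian_conjTranspose_mul_self AΩ
    simpa [Matrix.conjTranspose_eq_transpose_of_trivial] using this
  have heig : ∀ i, hGherm.eigenvalues i ∈ Set.Icc (1 - δ) (1 + δ) :=
    fun i => hspec _ (hGherm.eigenvalues_mem_spectrum_real i)
  have heigpos : ∀ i, 0 < hGherm.eigenvalues i :=
    fun i => lt_of_lt_of_le (by linarith) (heig i).1
  have hdet : G.det ≠ 0 := by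
    rw [hGherm.det_eq_prod_eigenvalues]
    exact ne_of_gt (Finset.prod_pos fun i _ => heigpos i)
  have hinv : G⁻¹ * G = 1 := Matrix.nonsing_inv_mul G (isUnit_iff_ne_zero.mpr hdet)
  have hBA : B * AΩ = 1 := by
    have h1 : G * (B * AΩ) = G := by
      calc G * (B * AΩ) = AΩᵀ * (AΩ * B * AΩ) := by
            rw [hGdef]; simp only [Matrix.mul_assoc]
        _ = G := by rw [hB.1, hGdef]
    have h2 := congrArg (fun X => G⁻¹ * X) h1
    simpa [← Matrix.mul_assoc, hinv] using h2
  have hBBt : B * Bᵀ = G⁻¹ := by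
    have h3 : B = B * Bᵀ * AΩᵀ := by
      calc B = B * (AΩ * B) := by rw [← Matrix.mul_assoc, hB.2.1]
        _ = B * (AΩ * B)ᵀ := by rw [hB.2.2.1]
        _ = B * Bᵀ * AΩᵀ := by rw [Matrix.transpose_mul, Matrix.mul_assoc]
    have h4 : B * Bᵀ * G = 1 := by
      rw [hGdef, ← Matrix.mul_assoc, ← h3, hBA]
    exact (Matrix.inv_eq_left_inv h4).symm
  set U : Matrix (Fin K) (Fin K) ℝ := (hGherm.eigenvectorUnitary : Matrix (Fin K) (Fin K) ℝ)
    with hUdef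
  have hUU : star U * U = 1 := (Matrix.mem_unitaryGroup_iff').mp hGherm.eigenvectorUnitary.2
  have hUU' : U * star U = 1 := (Matrix.mem_unitaryGroup_iff).mp hGherm.eigenvectorUnitary.2
  have hspecthm : G = U * diagonal (RCLike.ofReal ∘ hGherm.eigenvalues) * star U :=
    hGherm.spectral_theorem
  have hGinv : G⁻¹ = U * diagonal (fun i => (hGherm.eigenvalues i)⁻¹) * star U := by
    apply Matrix.inv_eq_right_inv
    calc G * (U * diagonal (fun i => (hGherm.eigenvalues i)⁻¹) * star U)
        = (U * diagonal (RCLike.ofReal ∘ hGherm.eigenvalues) * star U) *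
          (U * diagonal (fun i => (hGherm.eigenvalues i)⁻¹) * star U) := by rw [← hspecthm]
      _ = U * (diagonal (RCLike.ofReal ∘ hGherm.eigenvalues) * ((star U * U) *
            diagonal (fun i => (hGherm.eigenvalues i)⁻¹))) * star U := by
          simp only [Matrix.mul_assoc]
      _ = 1 := by
          rw [hUU, Matrix.one_mul, Matrix.diagonal_mul_diagonal]
          have : (fun i => (RCLike.ofReal ∘ hGherm.eigenvalues) i * (hGherm.eigenvalues i)⁻¹)
              = fun _ => (1 : ℝ) := by
            funext i
            simp [mul_inv_cancel₀ (heigpos i).ne']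
          rw [this, Matrix.diagonal_one, Matrix.mul_one, hUU']
  have htr : Matrix.trace (B * Bᵀ) = ∑ i, (hGherm.eigenvalues i)⁻¹ := by
    rw [hBBt, hGinv, Matrix.trace_mul_cycle, hUU, Matrix.one_mul, Matrix.trace_diagonal]
  constructor
  · rw [htr]
    calc (K : ℝ) * (1 + δ)⁻¹ = ∑ _i : Fin K, (1 + δ)⁻¹ := by
          rw [Finset.sum_const, Finset.card_univ, Fintype.card_fin, nsmul_eq_mul]
      _ ≤ _ := Finset.sum_le_sum fun i _ => inv_anti₀ (heigpos i) (heig i).2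
  · rw [htr]
    calc ∑ i, (hGherm.eigenvalues i)⁻¹ ≤ ∑ _i : Fin K, (1 - δ)⁻¹ :=
        Finset.sum_le_sum fun i _ => inv_anti₀ (by linarith) (heig i).1
      _ = (K : ℝ) * (1 - δ)⁻¹ := by
          rw [Finset.sum_const, Finset.card_univ, Fintype.card_fin, nsmul_eq_mul]

/-- The expected squared norm of `B *ᵥ z` for white noise `z` equals `vz * tr (B Bᵀ)`. -/
theorem expected_sq_norm (Mdim K : ℕ) (B : Matrix (Fin K) (Fin Mdim) ℝ)
    {Ω : Type*} [MeasureSpace Ω] (μ : Measure Ω)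
    (z : Ω → Fin Mdim → ℝ) (vz : ℝ)
    (hzint : ∀ i j, Integrable (fun ω => z ω i * z ω j) μ)
    (hzcov : ∀ i j, ∫ ω, z ω i * z ω j ∂μ = if i = j then vz else 0) :
    ∫ ω, ∑ i, (B.mulVec (z ω) i) ^ 2 ∂μ = vz * Matrix.trace (B * Bᵀ) := by
  have expand : ∀ ω, ∑ i, (B.mulVec (z ω) i) ^ 2
      = ∑ i, ∑ j, ∑ k, B i j * B i k * (z ω j * z ω k) := by
    intro ω
    refine Finset.sum_congr rfl fun i _ => ?_
    rw [Matrix.mulVec, dotProduct, sq, Finset.sum_mul_sum]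
    exact Finset.sum_congr rfl fun j _ => Finset.sum_congr rfl fun k _ => by ring
  have hint : ∀ (i : Fin K) (j k : Fin Mdim),
      Integrable (fun ω => B i j * B i k * (z ω j * z ω k)) μ :=
    fun i j k => (hzint j k).const_mul _
  calc ∫ ω, ∑ i, (B.mulVec (z ω) i) ^ 2 ∂μ
      = ∫ ω, ∑ i, ∑ j, ∑ k, B i j * B i k * (z ω j * z ω k) ∂μ := by
        simp only [expand]
    _ = ∑ i, ∑ j, ∑ k, ∫ ω, B i j * B i k * (z ω j * z ω k) ∂μ := by
        rw [integral_finset_sum _ fun i _ =>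
          integrable_finset_sum _ fun j _ => integrable_finset_sum _ fun k _ => hint i j k]
        refine Finset.sum_congr rfl fun i _ => ?_
        rw [integral_finset_sum _ fun j _ => integrable_finset_sum _ fun k _ => hint i j k]
        exact Finset.sum_congr rfl fun j _ =>
          integral_finset_sum _ fun k _ => hint i j k
    _ = ∑ i, ∑ j, ∑ k, B i j * B i k * (if j = k then vz else 0) := by
        refine Finset.sum_congr rfl fun i _ => Finset.sum_congr rfl fun j _ =>
          Finset.sum_congr rfl fun k _ => ?_
        rw [integral_const_mul, hzcov j k]
    _ = ∑ i, ∑ j, B i j * B i j * vz := by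
        refine Finset.sum_congr rfl fun i _ => Finset.sum_congr rfl fun j _ => ?_
        simp [mul_ite, mul_zero]
    _ = vz * Matrix.trace (B * Bᵀ) := by
        simp only [Matrix.trace, Matrix.diag, Matrix.mul_apply, Matrix.transpose_apply,
          Finset.mul_sum]
        exact Finset.sum_congr rfl fun i _ => Finset.sum_congr rfl fun j _ => by ring

/-- For a fixed `M×K` matrix `A_Ω` whose Gram matrix has all eigenvalues in
`[1−δ_K, 1+δ_K]` with `δ_K ∈ (0,1)` (the RIP bound), and white noise `z` with
covariance `σ_z² I`, the oracle error satisfies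
`(K/(1+δ_K)) σ_z² ≤ E_z[‖A_Ω† z‖²] ≤ (K/(1−δ_K)) σ_z²`. -/
theorem stmt17 (Mdim K : ℕ) (AΩ : Matrix (Fin Mdim) (Fin K) ℝ) (δ : ℝ)
    (hδ0 : 0 < δ) (hδ : δ < 1)
    (hspec : ∀ lam ∈ spectrum ℝ (AΩᵀ * AΩ), lam ∈ Set.Icc (1 - δ) (1 + δ))
    (B : Matrix (Fin K) (Fin Mdim) ℝ) (hB : IsMoorePenrose AΩ B)
    {Ω : Type*} [MeasureSpace Ω] (μ : Measure Ω) [IsProbabilityMeasure μ]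
    (z : Ω → Fin Mdim → ℝ) (vz : ℝ)
    (hzint : ∀ i j, Integrable (fun ω => z ω i * z ω j) μ)
    (hzmean : ∀ i, ∫ ω, z ω i ∂μ = 0)
    (hzcov : ∀ i j, ∫ ω, z ω i * z ω j ∂μ = if i = j then vz else 0) :
    (K : ℝ) / (1 + δ) * vz ≤ ∫ ω, ∑ i, (B.mulVec (z ω) i) ^ 2 ∂μ ∧
    ∫ ω, ∑ i, (B.mulVec (z ω) i) ^ 2 ∂μ ≤ (K : ℝ) / (1 - δ) * vz := by
  rcases Nat.eq_zero_or_pos K with hK | hK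
  · haveI : IsEmpty (Fin K) := by rw [hK]; infer_instance
    simp [hK]
  -- K > 0 : first, Mdim > 0, hence vz ≥ 0
  have hM : 0 < Mdim := by
    by_contra hM
    push_neg at hM
    interval_cases Mdim
    haveI : IsEmpty (Fin 0) := inferInstance
    have hG0 : AΩᵀ * AΩ = 0 := by
      ext i j
      simp [Matrix.mul_apply]
    have h0 : (0 : ℝ) ∈ spectrum ℝ (AΩᵀ * AΩ) := by
      rw [spectrum.zero_mem_iff, hG0]
      intro hu
      have := hu.map (Matrix.detMonoidHom)
      simp [(haveI := Fin.pos_iff_nonempty.mp hK; Matrix.det_zero (n := Fin K) (R := ℝ))] at this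
    have := (hspec 0 h0).1
    linarith
  have hvz : 0 ≤ vz := by
    have := hzcov ⟨0, hM⟩ ⟨0, hM⟩
    rw [if_pos rfl] at this
    rw [← this]
    exact integral_nonneg fun ω => mul_self_nonneg _
  have hEq := expected_sq_norm Mdim K B μ z vz hzint hzcov
  obtain ⟨h1, h2⟩ := trace_pinv_bounds Mdim K AΩ δ hδ hspec B hB
  rw [hEq]
  constructor
  · rw [div_eq_mul_inv, mul_comm vz]
    exact mul_le_mul_of_nonneg_right h1 hvz
  · rw [div_eq_mul_inv, mul_comm vz]
    exact mul_le_mul_of_nonneg_right h2 hvz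
end
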